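/- arXiv:2103.11947 — 3 statements merged into one kernel-verified Lean document; each statement's English description precedes it below -/
import Mathlib

section
/- Let q ∈ ℝ with |q| < 1, ψ(z) = (1 - qz)/√(1 - q²), and K_G(z,w) = ψ(z)·conj(ψ(w))/(1 - z·conj(w)). Then K_G(z,w) = ∑_{k,j≥1} M_{k,j} z^{k-1} conj(w)^{j-1} for z, w in the unit disc, where M is the inverse of the Kac–Murdock–Szegő matrix: M_{1,1} = 1/(1-q²), M_{k,k} = (1+q²)/(1-q²) for k ≥ 2, M_{k,j} = -q/(1-q²) for |k-j| = 1, 0 otherwise. -/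
open Complex

set_option maxHeartbeats 1000000 in
/-- For the inverse `M` of the Kac–Murdock–Szegő matrix, the kernel
`∑_{k,j≥1} M_{k,j} z^{k-1} conj(w)^{j-1}` equals `ψ(z) conj(ψ(w)) / (1 - z conj w)`
with `ψ(z) = (1 - q z)/√(1-q²)`. -/
theorem stmt_10 (q : ℝ) (hq : |q| < 1)
    (M : ℕ → ℕ → ℝ)
    (hM : ∀ k j, 1 ≤ k → 1 ≤ j → M k j =
      if k = j then
        (if k = 1 then 1 / (1 - q ^ 2) else (1 + q ^ 2) / (1 - q ^ 2))
      else if ((k : ℤ) - (j : ℤ)).natAbs = 1 then -q / (1 - q ^ 2) else 0)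
    (ψ : ℂ → ℂ) (hψ : ∀ z, ψ z = (1 - q * z) / (Real.sqrt (1 - q ^ 2) : ℂ))
    (z w : ℂ) (hz : ‖z‖ < 1) (hw : ‖w‖ < 1) :
    (∑' p : ℕ × ℕ, (M (p.1 + 1) (p.2 + 1) : ℂ) * z ^ p.1 * ((starRingEnd ℂ) w) ^ p.2)
      = ψ z * (starRingEnd ℂ) (ψ w) / (1 - z * (starRingEnd ℂ) w) := by
  have hq2 : (0:ℝ) < 1 - q ^ 2 := by nlinarith [_root_.sq_abs q, abs_nonneg q]
  set u : ℂ := (starRingEnd ℂ) w with hu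
  set r : ℂ := z * u with hr
  have hrn : ‖r‖ < 1 := by
    rw [hr, norm_mul, hu, RCLike.norm_conj]
    calc ‖z‖ * ‖w‖ ≤ 1 * ‖w‖ := by gcongr
    _ = ‖w‖ := one_mul _
    _ < 1 := hw
  have hr1 : (1 : ℂ) - r ≠ 0 := by
    intro h
    have : r = 1 := by linear_combination -h
    rw [this] at hrn; simp at hrn
  have hsum : Summable (fun n : ℕ => r ^ n) := summable_geometric_of_norm_lt_one hrn
  have hgeo : ∑' n : ℕ, r ^ n = (1 - r)⁻¹ := tsum_geometric_of_norm_lt_one hrn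
  -- constants
  set a0 : ℂ := 1 / (1 - (q:ℂ) ^ 2) with ha0
  set a : ℂ := (1 + (q:ℂ) ^ 2) / (1 - (q:ℂ) ^ 2) with ha
  set c : ℂ := -(q:ℂ) / (1 - (q:ℂ) ^ 2) with hc
  -- the three pieces
  set D : ℕ × ℕ → ℂ := fun p => if p.1 = p.2 then (a * r ^ p.1 + (if p.1 = 0 then a0 - a else 0)) else 0 with hD
  set U : ℕ × ℕ → ℂ := fun p => if p.1 + 1 = p.2 then c * u * r ^ p.1 else 0 with hU
  set L : ℕ × ℕ → ℂ := fun p => if p.2 + 1 = p.1 then c * z * r ^ p.2 else 0 with hL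
  have hpt : ∀ p : ℕ × ℕ, (M (p.1 + 1) (p.2 + 1) : ℂ) * z ^ p.1 * u ^ p.2 = D p + U p + L p := by
    rintro ⟨k, j⟩
    rw [hM _ _ (by omega) (by omega)]
    simp only [hD, hU, hL, hc, ha, ha0, hr]
    rcases eq_or_ne k j with h | h
    · subst h
      rcases eq_or_ne k 0 with h0 | h0
      · subst h0
        split_ifs <;> (push_cast; first | ring1 | (exfalso; first | exact ‹False› | omega))
      · split_ifs <;> (push_cast; first | ring1 | (exfalso; first | exact ‹False› | omega))
    · rcases eq_or_ne j (k + 1) with h1 | h1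
      · subst h1
        split_ifs <;> (push_cast; first | ring1 | (exfalso; first | exact ‹False› | omega))
      · rcases eq_or_ne k (j + 1) with h2 | h2
        · subst h2
          split_ifs <;> (push_cast; first | ring1 | (exfalso; first | exact ‹False› | omega))
        · split_ifs <;> (push_cast; first | ring1 | (exfalso; first | exact ‹False› | omega))
  -- summability and tsum of each piece
  have hdiag : Function.Injective (fun n : ℕ => ((n, n) : ℕ × ℕ)) := by
    intro a b h; simpa using congrArg Prod.fst h
  have hsup : Function.Injective (fun n : ℕ => ((n, n + 1) : ℕ × ℕ)) := by
    intro a b h; simpa using congrArg Prod.fst h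
  have hsub : Function.Injective (fun n : ℕ => ((n + 1, n) : ℕ × ℕ)) := by
    intro a b h; simpa using congrArg Prod.snd h
  have hDsupp : Function.support D ⊆ Set.range (fun n : ℕ => ((n, n) : ℕ × ℕ)) := by
    rintro ⟨k, j⟩ hp
    simp only [hD, Function.mem_support] at hp
    by_cases h : k = j
    · exact ⟨k, by simp [h]⟩
    · simp [h] at hp
  have hUsupp : Function.support U ⊆ Set.range (fun n : ℕ => ((n, n + 1) : ℕ × ℕ)) := by
    rintro ⟨k, j⟩ hp
    simp only [hU, Function.mem_support] at hp
    by_cases h : k + 1 = j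
    · exact ⟨k, by simp [h]⟩
    · simp [h] at hp
  have hLsupp : Function.support L ⊆ Set.range (fun n : ℕ => ((n + 1, n) : ℕ × ℕ)) := by
    rintro ⟨k, j⟩ hp
    simp only [hL, Function.mem_support] at hp
    by_cases h : j + 1 = k
    · exact ⟨j, by simp [h]⟩
    · simp [h] at hp
  have hDcomp : (fun n : ℕ => D (n, n)) = fun n : ℕ => a * r ^ n + (if n = 0 then a0 - a else 0) := by
    funext n; simp [hD]
  have hUcomp : (fun n : ℕ => U (n, n + 1)) = fun n : ℕ => c * u * r ^ n := by
    funext n; simp [hU]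
  have hLcomp : (fun n : ℕ => L (n + 1, n)) = fun n : ℕ => c * z * r ^ n := by
    funext n; simp [hL]
  have hDs' : Summable (fun n : ℕ => a * r ^ n + (if n = 0 then a0 - a else 0)) :=
    (hsum.mul_left a).add (summable_of_ne_finset_zero (s := {0}) (by intro n hn; simp at hn; simp [hn]))
  have hDs : Summable D := (hdiag.summable_iff (fun x hx => by
      by_contra h; exact hx (hDsupp h))).mp (by rw [Function.comp_def]; simpa [hDcomp] using hDs')
  have hUs : Summable U := (hsup.summable_iff (fun x hx => by
      by_contra h; exact hx (hUsupp h))).mp (by rw [Function.comp_def]; simpa [hUcomp] using hsum.mul_left (c * u))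
  have hLs : Summable L := (hsub.summable_iff (fun x hx => by
      by_contra h; exact hx (hLsupp h))).mp (by rw [Function.comp_def]; simpa [hLcomp] using hsum.mul_left (c * z))
  have hDt : ∑' p, D p = a * (1 - r)⁻¹ + (a0 - a) := by
    rw [← hdiag.tsum_eq hDsupp]
    rw [show (∑' n : ℕ, D (n, n)) = ∑' n : ℕ, (a * r ^ n + (if n = 0 then a0 - a else 0)) from by
      exact tsum_congr (fun n => congrFun hDcomp n)]
    rw [Summable.tsum_add (hsum.mul_left a) (summable_of_ne_finset_zero (s := {0}) (by intro n hn; simp at hn; simp [hn]))]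
    rw [tsum_mul_left, hgeo, tsum_ite_eq]
  have hUt : ∑' p, U p = c * u * (1 - r)⁻¹ := by
    rw [← hsup.tsum_eq hUsupp]
    rw [show (∑' n : ℕ, U (n, n + 1)) = ∑' n : ℕ, c * u * r ^ n from
      tsum_congr (fun n => congrFun hUcomp n)]
    rw [tsum_mul_left, hgeo]
  have hLt : ∑' p, L p = c * z * (1 - r)⁻¹ := by
    rw [← hsub.tsum_eq hLsupp]
    rw [show (∑' n : ℕ, L (n + 1, n)) = ∑' n : ℕ, c * z * r ^ n from
      tsum_congr (fun n => congrFun hLcomp n)]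
    rw [tsum_mul_left, hgeo]
  calc (∑' p : ℕ × ℕ, (M (p.1 + 1) (p.2 + 1) : ℂ) * z ^ p.1 * u ^ p.2)
      = ∑' p : ℕ × ℕ, (D p + U p + L p) := tsum_congr hpt
    _ = (∑' p, D p) + (∑' p, U p) + (∑' p, L p) := by
        rw [Summable.tsum_add (hDs.add hUs) hLs, Summable.tsum_add hDs hUs]
    _ = ψ z * (starRingEnd ℂ) (ψ w) / (1 - r) := by
        rw [hDt, hUt, hLt, hψ, hψ]
        rw [map_div₀, map_sub, map_one, map_mul, Complex.conj_ofReal, Complex.conj_ofReal]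
        have hqne : (1 : ℂ) - (q:ℂ) ^ 2 ≠ 0 := by
          intro h
          have h2 : ((1 - q ^ 2 : ℝ) : ℂ) = 0 := by push_cast; linear_combination h
          exact hq2.ne' (Complex.ofReal_eq_zero.mp h2)
        have hs : ((Real.sqrt (1 - q ^ 2) : ℝ) : ℂ) * ((Real.sqrt (1 - q ^ 2) : ℝ) : ℂ)
            = 1 - (q:ℂ) ^ 2 := by
          rw [← Complex.ofReal_mul, Real.mul_self_sqrt hq2.le]; push_cast; ring
        rw [div_mul_div_comm, hs]
        rw [hr] at hr1
        simp only [ha0, ha, hc, hr, ← hu]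
        field_simp [hqne, hr1]
        ring
end

section
/- Let z, w ∈ ℂ with |z| < 1 and |w| < 1. Then ∑_{n=1}^∞ P_n(z)·conj(P_n(w)) = 2/((1 - z)(1 - conj(w))(1 - z·conj(w))), where P_n(z) = √(2/(n(n+1)))·∑_{k=1}^{n} k·z^{k-1}. -/
open Complex Filter

set_option maxHeartbeats 1000000


lemma aux_geom {x : ℂ} (hx : ‖x‖ < 1) :
    HasSum (fun n : ℕ => ((n : ℂ) + 1) * x ^ n) (1 / (1 - x) ^ 2) := by
  have hx1 : (1 : ℂ) - x ≠ 0 := by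
    intro h
    rw [sub_eq_zero] at h
    rw [← h] at hx
    simp at hx
  have h1 := hasSum_coe_mul_geometric_of_norm_lt_one (𝕜 := ℂ) hx
  have h2 := hasSum_geometric_of_norm_lt_one hx
  have h3 := h1.add h2
  have h4 : (fun n : ℕ => ((n : ℂ) + 1) * x ^ n) = fun n : ℕ => (n:ℂ) * x ^ n + x ^ n := by
    funext n; ring
  have h5 : (1 / (1 - x) ^ 2) = x / (1 - x) ^ 2 + (1 - x)⁻¹ := by
    rw [inv_eq_one_div, div_add_div _ _ (pow_ne_zero 2 hx1) hx1,
      div_eq_div_iff (pow_ne_zero 2 hx1) (mul_ne_zero (pow_ne_zero 2 hx1) hx1)]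
    ring
  rw [h4, h5]; exact h3

lemma aux_tel (m : ℕ) :
    HasSum (fun n : ℕ => (2:ℝ) / (((n:ℝ) + m + 1) * ((n:ℝ) + m + 2))) (2 / (m + 1)) := by
  have hnn : ∀ n : ℕ, 0 ≤ (2:ℝ) / (((n:ℝ) + m + 1) * ((n:ℝ) + m + 2)) := fun n => by positivity
  rw [hasSum_iff_tendsto_nat_of_nonneg hnn]
  have key : ∀ N : ℕ, ∑ i ∈ Finset.range N, (2:ℝ) / (((i:ℝ) + m + 1) * ((i:ℝ) + m + 2))
      = 2 / (m + 1) - 2 / ((N:ℝ) + m + 1) := by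
    intro N
    induction N with
    | zero => simp
    | succ N ih =>
      rw [Finset.sum_range_succ, ih]
      have h1 : ((N:ℝ) + m + 1) ≠ 0 := by positivity
      have h2 : ((N:ℝ) + m + 2) ≠ 0 := by positivity
      have h3 : ((m:ℝ) + 1) ≠ 0 := by positivity
      push_cast
      field_simp
      ring
  simp_rw [key]
  have h : Tendsto (fun N : ℕ => (N:ℝ) + m + 1) atTop atTop := by
    apply tendsto_atTop_add_const_right
    apply tendsto_atTop_add_const_right
    exact tendsto_natCast_atTop_atTop
  have h2 : Tendsto (fun N : ℕ => 2 / ((N:ℝ) + m + 1)) atTop (nhds 0) := by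
    simp_rw [div_eq_mul_inv]
    simpa using (tendsto_inv_atTop_zero.comp h).const_mul (2:ℝ)
  simpa using tendsto_const_nhds.sub h2

lemma aux_telC (m : ℕ) :
    HasSum (fun n : ℕ => (2:ℂ) / (((n:ℂ) + m + 1) * ((n:ℂ) + m + 2))) (2 / ((m:ℂ) + 1)) := by
  have h := (aux_tel m).map Complex.ofRealHom Complex.continuous_ofReal
  convert h using 1
  · funext n
    simp only [Function.comp_apply, ofRealHom_eq_coe]
    push_cast
    ring
  · simp only [ofRealHom_eq_coe]
    push_cast
    ring


noncomputable def auxG (z u : ℂ) : ℕ × ℕ × ℕ → ℂ := fun t =>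
  if t.2.1 ≤ t.1 ∧ t.2.2 ≤ t.1 then
    ((2 / (((t.1:ℝ) + 1) * ((t.1:ℝ) + 2)) : ℝ) : ℂ)
      * (((t.2.1:ℂ) + 1) * z ^ t.2.1) * (((t.2.2:ℂ) + 1) * u ^ t.2.2)
  else 0

lemma norm_succ_cast (j : ℕ) : ‖((j:ℂ) + 1)‖ = (j:ℝ) + 1 := by
  rw [show ((j:ℂ) + 1) = ((j+1 : ℕ) : ℂ) by push_cast; ring, Complex.norm_natCast]
  push_cast; ring

lemma summable_succ_geom {r : ℝ} (h0 : 0 ≤ r) (h1 : r < 1) :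
    Summable (fun j : ℕ => ((j:ℝ) + 1) * r ^ j) := by
  have hr : ‖r‖ < 1 := by rwa [Real.norm_eq_abs, _root_.abs_of_nonneg h0]
  have := (hasSum_coe_mul_geometric_of_norm_lt_one (𝕜 := ℝ) hr).summable.add
    (hasSum_geometric_of_norm_lt_one hr).summable
  refine this.congr fun n => by ring

lemma aux_tel' : Summable (fun n : ℕ => (2:ℝ) / (((n:ℝ) + 1) * ((n:ℝ) + 2))) := by
  have h := (aux_tel 0).summable
  simp only [Nat.cast_zero, add_zero] at h
  exact h

lemma auxG_summable {z u : ℂ} (hz : ‖z‖ < 1) (hu : ‖u‖ < 1) : Summable (auxG z u) := by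
  have hbz := summable_succ_geom (norm_nonneg z) hz
  have hbu := summable_succ_geom (norm_nonneg u) hu
  have hinner : Summable (fun p : ℕ × ℕ =>
      (((p.1:ℝ) + 1) * ‖z‖ ^ p.1) * (((p.2:ℝ) + 1) * ‖u‖ ^ p.2)) :=
    hbz.mul_of_nonneg hbu (fun j => by positivity) (fun k => by positivity)
  have hB : Summable (fun t : ℕ × ℕ × ℕ =>
      (2 / (((t.1:ℝ) + 1) * ((t.1:ℝ) + 2)))
        * ((((t.2.1:ℝ) + 1) * ‖z‖ ^ t.2.1) * (((t.2.2:ℝ) + 1) * ‖u‖ ^ t.2.2))) :=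
    aux_tel'.mul_of_nonneg hinner (fun n => by positivity)
      (fun p => by positivity)
  apply Summable.of_norm_bounded hB
  rintro ⟨n, j, k⟩
  simp only [auxG]
  split_ifs with h
  · rw [norm_mul, norm_mul, norm_mul, norm_mul, Complex.norm_real, norm_pow, norm_pow,
      norm_succ_cast, norm_succ_cast, Real.norm_eq_abs,
      _root_.abs_of_nonneg (show (0:ℝ) ≤ 2 / (((n:ℝ) + 1) * ((n:ℝ) + 2)) by positivity)]
    apply le_of_eq
    ring
  · simp only [norm_zero]
    positivity

lemma auxG_slice (z u : ℂ) (j k : ℕ) :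
    HasSum (fun n : ℕ => auxG z u (n, j, k))
      ((2 / (((max j k : ℕ) : ℂ) + 1)) * (((j:ℂ) + 1) * z ^ j * (((k:ℂ) + 1) * u ^ k))) := by
  set m := max j k with hm
  set X : ℂ := ((j:ℂ) + 1) * z ^ j * (((k:ℂ) + 1) * u ^ k) with hX
  set f : ℕ → ℂ :=
    fun n => if m ≤ n then ((2 / (((n:ℝ) + 1) * ((n:ℝ) + 2)) : ℝ) : ℂ) else 0 with hf
  have heq : ∀ n : ℕ, auxG z u (n, j, k) = f n * X := by
    intro n
    simp only [auxG, hf, hX]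
    by_cases h : m ≤ n
    · rw [if_pos h, if_pos ⟨le_trans (le_max_left _ _) h, le_trans (le_max_right _ _) h⟩]
      ring
    · rw [if_neg h, if_neg, zero_mul]
      intro hc
      exact h (max_le hc.1 hc.2)
  have heq2 : (fun n : ℕ => f (n + m))
      = fun n : ℕ => (2:ℂ) / (((n:ℂ) + m + 1) * ((n:ℂ) + m + 2)) := by
    funext n
    simp only [hf]
    rw [if_pos (Nat.le_add_left m n)]
    push_cast
    ring
  have h2 : HasSum (fun n : ℕ => f (n + m)) ((2:ℂ) / ((m:ℂ) + 1)) := by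
    rw [heq2]; exact aux_telC m
  have h3 := (hasSum_nat_add_iff (f := f) m).1 h2
  have h4 : ∑ i ∈ Finset.range m, f i = 0 := by
    apply Finset.sum_eq_zero
    intro i hi
    simp only [hf]
    rw [if_neg]
    exact fun hc => absurd hc (not_le.2 (Finset.mem_range.1 hi))
  rw [h4, add_zero] at h3
  have final := h3.mul_right X
  have hfe : (fun n : ℕ => f n * X) = fun n : ℕ => auxG z u (n, j, k) :=
    funext fun n => (heq n).symm
  rwa [hfe] at final

lemma auxG_row (z u : ℂ) (n : ℕ) :
    ∑' p : ℕ × ℕ, auxG z u (n, p)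
      = ((2 / (((n:ℝ) + 1) * ((n:ℝ) + 2)) : ℝ) : ℂ)
        * ((∑ j ∈ Finset.range (n+1), ((j:ℂ) + 1) * z ^ j)
          * (∑ k ∈ Finset.range (n+1), ((k:ℂ) + 1) * u ^ k)) := by
  rw [tsum_eq_sum (s := Finset.range (n+1) ×ˢ Finset.range (n+1))
    (by
      rintro ⟨j, k⟩ hp
      simp only [Finset.mem_product, Finset.mem_range, Nat.lt_succ_iff] at hp
      simp only [auxG]
      rw [if_neg hp])]
  rw [Finset.sum_product, Finset.sum_mul_sum, Finset.mul_sum]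
  apply Finset.sum_congr rfl
  intro j hj
  rw [Finset.mul_sum]
  apply Finset.sum_congr rfl
  intro k hk
  simp only [auxG]
  rw [if_pos ⟨Nat.lt_succ_iff.1 (Finset.mem_range.1 hj),
    Nat.lt_succ_iff.1 (Finset.mem_range.1 hk)⟩]
  ring

noncomputable def auxR (z u : ℂ) : ℕ × ℕ → ℂ := fun p =>
  2 / (((max p.1 p.2 : ℕ) : ℂ) + 1)
    * (((p.1:ℂ) + 1) * z ^ p.1 * (((p.2:ℂ) + 1) * u ^ p.2))

lemma auxR_hasSum {z u : ℂ} (hz : ‖z‖ < 1) (hu : ‖u‖ < 1) :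
    HasSum (auxR z u) (∑' t : ℕ × ℕ × ℕ, auxG z u t) := by
  have hG := auxG_summable hz hu
  have hG' : Summable (fun s : (ℕ × ℕ) × ℕ => auxG z u (s.2, s.1)) :=
    ((Equiv.prodComm (ℕ × ℕ) ℕ).summable_iff).2 hG
  have h := HasSum.prod_fiberwise hG'.hasSum (fun p => auxG_slice z u p.1 p.2)
  have he : ∑' s : (ℕ × ℕ) × ℕ, auxG z u (s.2, s.1) = ∑' t : ℕ × ℕ × ℕ, auxG z u t :=
    (Equiv.prodComm (ℕ × ℕ) ℕ).tsum_eq (auxG z u)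
  rw [he] at h
  exact h

lemma auxR1_tsum {z u : ℂ} (hz : ‖z‖ < 1) (hu : ‖u‖ < 1)
    (hs : Summable (fun p : ℕ × ℕ => if p.1 ≤ p.2 then auxR z u p else 0)) :
    ∑' p : ℕ × ℕ, (if p.1 ≤ p.2 then auxR z u p else 0)
      = 2 * (1 / (1 - z * u) ^ 2) * (1 - u)⁻¹ := by
  have hzu : ‖z * u‖ < 1 := by
    rw [norm_mul]; nlinarith [norm_nonneg z, norm_nonneg u]
  have e1inj : Function.Injective (fun q : ℕ × ℕ => ((q.1, q.1 + q.2) : ℕ × ℕ)) := by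
    rintro ⟨a, b⟩ ⟨c, d⟩ h
    simp only [Prod.mk.injEq] at h
    exact Prod.ext h.1 (by omega)
  have hsupp : Function.support (fun p : ℕ × ℕ => if p.1 ≤ p.2 then auxR z u p else 0)
      ⊆ Set.range (fun q : ℕ × ℕ => ((q.1, q.1 + q.2) : ℕ × ℕ)) := by
    rintro ⟨a, b⟩ hp
    by_cases h : a ≤ b
    · exact ⟨(a, b - a), by simp; omega⟩
    · exfalso; apply hp; simp [h]
  rw [← e1inj.tsum_eq hsupp]
  have hfun : (fun q : ℕ × ℕ =>
        (fun p : ℕ × ℕ => if p.1 ≤ p.2 then auxR z u p else 0) ((fun q : ℕ × ℕ => ((q.1, q.1 + q.2) : ℕ × ℕ)) q))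
      = fun q : ℕ × ℕ => (2 * (((q.1:ℂ) + 1) * (z * u) ^ q.1)) * u ^ q.2 := by
    funext q
    obtain ⟨j, d⟩ := q
    simp only
    rw [if_pos (Nat.le_add_right j d)]
    simp only [auxR]
    rw [max_eq_right (Nat.le_add_right j d)]
    have hne : ((j + d : ℕ) : ℂ) + 1 ≠ 0 := Nat.cast_add_one_ne_zero _
    push_cast at hne ⊢
    field_simp
    ring
  rw [hfun]
  have hf : HasSum (fun j : ℕ => 2 * (((j:ℂ) + 1) * (z * u) ^ j)) (2 * (1 / (1 - z * u) ^ 2)) :=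
    (aux_geom hzu).mul_left 2
  have hg : HasSum (fun d : ℕ => u ^ d) (1 - u)⁻¹ := hasSum_geometric_of_norm_lt_one hu
  have hsum : Summable (fun q : ℕ × ℕ => (2 * (((q.1:ℂ) + 1) * (z * u) ^ q.1)) * u ^ q.2) :=
    (hs.comp_injective e1inj).congr (fun q => congrFun hfun q)
  exact (hf.mul hg hsum).tsum_eq

lemma auxR2_tsum {z u : ℂ} (hz : ‖z‖ < 1) (hu : ‖u‖ < 1)
    (hs : Summable (fun p : ℕ × ℕ => if p.2 < p.1 then auxR z u p else 0)) :
    ∑' p : ℕ × ℕ, (if p.2 < p.1 then auxR z u p else 0)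
      = 2 * z * (1 / (1 - z * u) ^ 2) * (1 - z)⁻¹ := by
  have hzu : ‖z * u‖ < 1 := by
    rw [norm_mul]; nlinarith [norm_nonneg z, norm_nonneg u]
  have e2inj : Function.Injective (fun q : ℕ × ℕ => ((q.1 + q.2 + 1, q.1) : ℕ × ℕ)) := by
    rintro ⟨a, b⟩ ⟨c, d⟩ h
    simp only [Prod.mk.injEq] at h
    exact Prod.ext h.2 (by omega)
  have hsupp : Function.support (fun p : ℕ × ℕ => if p.2 < p.1 then auxR z u p else 0)
      ⊆ Set.range (fun q : ℕ × ℕ => ((q.1 + q.2 + 1, q.1) : ℕ × ℕ)) := by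
    rintro ⟨a, b⟩ hp
    by_cases h : b < a
    · exact ⟨(b, a - b - 1), by simp; omega⟩
    · exfalso; apply hp; simp [h]
  rw [← e2inj.tsum_eq hsupp]
  have hfun : (fun q : ℕ × ℕ =>
        (fun p : ℕ × ℕ => if p.2 < p.1 then auxR z u p else 0) ((fun q : ℕ × ℕ => ((q.1 + q.2 + 1, q.1) : ℕ × ℕ)) q))
      = fun q : ℕ × ℕ => (2 * z * (((q.1:ℂ) + 1) * (z * u) ^ q.1)) * z ^ q.2 := by
    funext q
    obtain ⟨k, d⟩ := q
    simp only
    rw [if_pos (by omega : k < k + d + 1)]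
    simp only [auxR]
    rw [max_eq_left (by omega : k ≤ k + d + 1)]
    have hne : ((k + d + 1 : ℕ) : ℂ) + 1 ≠ 0 := Nat.cast_add_one_ne_zero _
    push_cast at hne ⊢
    field_simp
    ring
  rw [hfun]
  have hf : HasSum (fun j : ℕ => 2 * z * (((j:ℂ) + 1) * (z * u) ^ j))
      (2 * z * (1 / (1 - z * u) ^ 2)) := (aux_geom hzu).mul_left (2 * z)
  have hg : HasSum (fun d : ℕ => z ^ d) (1 - z)⁻¹ := hasSum_geometric_of_norm_lt_one hz
  have hsum : Summable (fun q : ℕ × ℕ => (2 * z * (((q.1:ℂ) + 1) * (z * u) ^ q.1)) * z ^ q.2) :=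
    (hs.comp_injective e2inj).congr (fun q => congrFun hfun q)
  exact (hf.mul hg hsum).tsum_eq

/-- For `z, w` in the open unit disc,
`∑_{n≥1} P_n(z) conj(P_n(w)) = 2/((1-z)(1-conj w)(1-z conj w))` where
`P_n(z) = √(2/(n(n+1))) ∑_{k=1}^n k z^{k-1}`. -/
theorem stmt_12 (P : ℕ → ℂ → ℂ)
    (hP : ∀ n z, P n z =
      (Real.sqrt (2 / (n * (n + 1))) : ℂ) * ∑ k ∈ Finset.range n, (k + 1 : ℂ) * z ^ k)
    (z w : ℂ) (hz : ‖z‖ < 1) (hw : ‖w‖ < 1) :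
    (∑' n : ℕ, P (n + 1) z * (starRingEnd ℂ) (P (n + 1) w))
      = 2 / ((1 - z) * (1 - (starRingEnd ℂ) w) * (1 - z * (starRingEnd ℂ) w)) := by
  have hu : ‖(starRingEnd ℂ) w‖ < 1 := by rwa [RCLike.norm_conj]
  have hz1 : (1 : ℂ) - z ≠ 0 := by
    intro h; rw [sub_eq_zero] at h; rw [← h] at hz; simp at hz
  have hu1 : (1 : ℂ) - (starRingEnd ℂ) w ≠ 0 := by
    intro h; rw [sub_eq_zero] at h; rw [← h] at hu; simp at hu
  have hzu : ‖z * (starRingEnd ℂ) w‖ < 1 := by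
    rw [norm_mul]; nlinarith [norm_nonneg z, norm_nonneg ((starRingEnd ℂ) w)]
  have hx1 : (1 : ℂ) - z * (starRingEnd ℂ) w ≠ 0 := by
    intro h; rw [sub_eq_zero] at h; rw [← h] at hzu; simp at hzu
  have hG := auxG_summable hz hu
  -- Step A: rewrite each term of the series
  have key : ∀ n : ℕ, P (n + 1) z * (starRingEnd ℂ) (P (n + 1) w)
      = ∑' p : ℕ × ℕ, auxG z ((starRingEnd ℂ) w) (n, p) := by
    intro n
    rw [auxG_row, hP, hP, map_mul, map_sum]
    simp only [map_mul, map_pow, map_add, map_one, Complex.conj_natCast, Complex.conj_ofReal]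
    rw [mul_mul_mul_comm, ← Complex.ofReal_mul,
      Real.mul_self_sqrt (by positivity)]
    congr 2
    push_cast
    ring
  rw [tsum_congr key, ← Summable.tsum_prod' hG hG.prod_factor]
  -- Step B: resum over fibers
  have hR := auxR_hasSum hz hu
  rw [← hR.tsum_eq]
  -- Step C: split the sum along the diagonal
  have hsplit : ∀ p : ℕ × ℕ, auxR z ((starRingEnd ℂ) w) p
      = (if p.1 ≤ p.2 then auxR z ((starRingEnd ℂ) w) p else 0)
        + (if p.2 < p.1 then auxR z ((starRingEnd ℂ) w) p else 0) := by
    intro p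
    by_cases h : p.1 ≤ p.2
    · rw [if_pos h, if_neg (not_lt.2 h), add_zero]
    · rw [if_neg h, if_pos (not_le.1 h), zero_add]
  have hnorm : Summable (fun p : ℕ × ℕ => ‖auxR z ((starRingEnd ℂ) w) p‖) :=
    summable_norm_iff.2 hR.summable
  have hR1s : Summable (fun p : ℕ × ℕ => if p.1 ≤ p.2 then auxR z ((starRingEnd ℂ) w) p else 0) := by
    apply Summable.of_norm_bounded hnorm
    intro p
    by_cases h : p.1 ≤ p.2
    · rw [if_pos h]
    · rw [if_neg h, norm_zero]; positivity
  have hR2s : Summable (fun p : ℕ × ℕ => if p.2 < p.1 then auxR z ((starRingEnd ℂ) w) p else 0) := by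
    apply Summable.of_norm_bounded hnorm
    intro p
    by_cases h : p.2 < p.1
    · rw [if_pos h]
    · rw [if_neg h, norm_zero]; positivity
  rw [tsum_congr hsplit, Summable.tsum_add hR1s hR2s, auxR1_tsum hz hu hR1s, auxR2_tsum hz hu hR2s]
  field_simp
  ring
end

section
/- For n a positive integer and q real nonzero with |q| < 1/2, set α = 1/(2|q|) and let U_k be the Chebyshev polynomials of the second kind. The n×n symmetric matrix M with entries M_{k,j} = (−1)^{k+j} (q^{j−k}/|q|^{j−k+1}) · U_{k−1}(α)U_{n−j}(α)/U_n(α) for k ≤ j (and M_{j,k} = M_{k,j}) satisfies M·G_n = I, where G_n is the n×n tridiagonal Toeplitz matrix with 1 on the diagonal and q on the sub- and super-diagonals. -/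
open Matrix Polynomial


noncomputable def chebU (α : ℝ) (m : ℕ) : ℝ := (Polynomial.Chebyshev.U ℝ (m : ℤ)).eval α

lemma chebU_zero (α : ℝ) : chebU α 0 = 1 := by simp [chebU]

lemma chebU_one (α : ℝ) : chebU α 1 = 2 * α := by simp [chebU]

lemma chebU_rec (α : ℝ) (m : ℕ) : chebU α (m + 2) = 2 * α * chebU α (m + 1) - chebU α m := by
  have h := Polynomial.Chebyshev.U_add_two ℝ (m : ℤ)
  have : ((m : ℤ) + 2) = ((m + 2 : ℕ) : ℤ) := by push_cast; ring
  rw [this] at h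
  have h1 : ((m : ℤ) + 1) = ((m + 1 : ℕ) : ℤ) := by push_cast; ring
  rw [h1] at h
  simp [chebU, h]

lemma chebU_pos_aux (α : ℝ) (hα : 1 ≤ α) : ∀ m, 0 < chebU α m ∧ chebU α m ≤ chebU α (m + 1) := by
  intro m
  induction m with
  | zero => constructor
            · simp [chebU_zero]
            · rw [chebU_zero, chebU_one]; linarith
  | succ k ih =>
    obtain ⟨h1, h2⟩ := ih
    have h3 : 0 < chebU α (k + 1) := lt_of_lt_of_le h1 h2
    refine ⟨h3, ?_⟩
    rw [chebU_rec]
    nlinarith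

lemma chebU_pos (α : ℝ) (hα : 1 ≤ α) (m : ℕ) : 0 < chebU α m := (chebU_pos_aux α hα m).1

lemma chebU_prod (α : ℝ) (a b : ℕ) :
    chebU α (a + b + 2) = chebU α (a + 1) * chebU α (b + 1) - chebU α a * chebU α b := by
  induction b using Nat.twoStepInduction generalizing a with
  | zero =>
    have := chebU_rec α a
    rw [chebU_zero, chebU_one]
    linarith [chebU_rec α a]
  | one =>
    have h2 : chebU α 2 = 2 * α * (2*α) - 1 := by
      have := chebU_rec α 0; rw [chebU_zero, chebU_one] at this; linarith
    have ha := chebU_rec α a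
    have ha1 := chebU_rec α (a + 1)
    have e1 : a + 1 + 2 = a + 3 := by ring
    have e0 : a + 1 + 1 = a + 2 := by ring
    rw [e1, e0] at ha1
    rw [show a + 1 + 2 = a + 3 from rfl, h2, chebU_one]
    linear_combination ha1 + 2*α*ha
  | more b ihb ihb1 =>
    have h1 := ihb a
    have h2 := ihb1 a
    have hb := chebU_rec α b
    have hb1 := chebU_rec α (b + 1)
    have hab := chebU_rec α (a + b + 2)
    have e : a + (b + 2) + 2 = (a + b + 2) + 2 := by ring
    rw [e, hab]
    have e2 : a + (b + 1) + 2 = a + b + 2 + 1 := by ring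
    have e3 : b + 1 + 1 = b + 2 := rfl
    rw [e2, e3] at h2
    have e4 : b + 1 + 2 = b + 3 := rfl
    have e5 : b + 1 + 1 = b + 2 := rfl
    rw [e4, e5] at hb1
    have e6 : b + 2 + 1 = b + 3 := rfl
    rw [e6]
    linear_combination 2*α*h2 - h1 - chebU α (a+1) * hb1 + chebU α a * hb

/-- Explicit inverse of the `n×n` tridiagonal Toeplitz matrix `G_n` (diagonal `1`,
off-diagonals `q`, `0 < |q| < 1/2`) in terms of Chebyshev polynomials of the second
kind evaluated at `α = 1/(2|q|)`: the symmetric matrix `M` with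
`M_{k,j} = (−1)^{k+j} (q^{j−k}/|q|^{j−k+1}) U_{k−1}(α) U_{n−j}(α) / U_n(α)` for `k ≤ j`
(here written with 0-based indices) satisfies `M · G_n = 1`. -/
theorem stmt_19 (n : ℕ) (hn : 0 < n) (q : ℝ) (hq0 : q ≠ 0) (hq : |q| < 1 / 2)
    (α : ℝ) (hα : α = 1 / (2 * |q|))
    (G M : Matrix (Fin n) (Fin n) ℝ)
    (hG : ∀ k j : Fin n, G k j =
      if k = j then 1 else if ((k : ℤ) - (j : ℤ)).natAbs = 1 then q else 0)
    (hMsym : ∀ k j : Fin n, M k j = M j k)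
    (hM : ∀ k j : Fin n, (k : ℕ) ≤ (j : ℕ) → M k j =
      (-1 : ℝ) ^ ((k : ℕ) + (j : ℕ)) *
        (q ^ ((j : ℕ) - (k : ℕ)) / |q| ^ ((j : ℕ) - (k : ℕ) + 1)) *
        ((Polynomial.Chebyshev.U ℝ (k : ℕ)).eval α *
          (Polynomial.Chebyshev.U ℝ ((n - 1 - (j : ℕ) : ℕ) : ℤ)).eval α /
          (Polynomial.Chebyshev.U ℝ (n : ℤ)).eval α)) :
    M * G = 1 := by
  have hq' : (0:ℝ) < |q| := abs_pos.mpr hq0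
  have hα1 : 1 ≤ α := by
    rw [hα]; rw [le_div_iff₀ (by linarith)]; linarith
  have h2a : 2 * α * |q| = 1 := by
    rw [hα]; field_simp
  set r : ℝ := -(q / |q|) with hr
  have habs : |q| * |q| = q * q := abs_mul_abs_self q
  have hqne : |q| ≠ 0 := ne_of_gt hq'
  have hr2 : r * r = 1 := by
    rw [hr]
    field_simp
    rw [sq_abs]
  have hqr : q * r = -|q| := by
    rw [hr]
    field_simp
    rw [sq_abs]
  have h2aq : r = -(2 * α * q) := by
    rw [hr, hα]
    field_simp
  have hupos : ∀ m, 0 < chebU α m := fun m => chebU_pos α hα1 m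
  have hp2 : ∀ d : ℕ, r ^ (d+2) = r ^ d := by
    intro d
    rw [pow_add, pow_two, hr2, mul_one]
  have hun : chebU α n ≠ 0 := ne_of_gt (hupos n)
  have hD : |q| * chebU α n ≠ 0 := mul_ne_zero (ne_of_gt hq') hun
  -- entry formula
  have hMval : ∀ k j : Fin n, (k:ℕ) ≤ (j:ℕ) → M k j =
      r ^ ((j:ℕ) - (k:ℕ)) *
        (chebU α (k:ℕ) * chebU α (n - 1 - (j:ℕ)) / (|q| * chebU α n)) := by
    intro k j hkj
    rw [hM k j hkj]
    simp only [chebU]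
    have h1 : (-1:ℝ)^((k:ℕ)+(j:ℕ)) = (-1)^((j:ℕ)-(k:ℕ)) := by
      have h : (k:ℕ)+(j:ℕ) = ((j:ℕ)-(k:ℕ)) + 2*(k:ℕ) := by omega
      rw [h, pow_add, pow_mul]
      norm_num
    rw [h1]
    have h2 : r ^ ((j:ℕ)-(k:ℕ)) = (-1:ℝ)^((j:ℕ)-(k:ℕ)) * (q^((j:ℕ)-(k:ℕ)) / |q|^((j:ℕ)-(k:ℕ))) := by
      rw [hr, neg_pow, div_pow]
    rw [h2, pow_succ]
    have h3 : |q| ^ ((j:ℕ)-(k:ℕ)) ≠ 0 := pow_ne_zero _ (ne_of_gt hq')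
    field_simp
  -- the sum over a row of G
  ext k j
  rw [Matrix.mul_apply]
  have hGsplit : ∀ i : Fin n, G i j = (if i = j then (1:ℝ) else 0)
      + q * (if (i:ℕ)+1 = (j:ℕ) then 1 else 0) + q * (if (i:ℕ) = (j:ℕ)+1 then 1 else 0) := by
    intro i
    rw [hG]
    have hvi : ((i:ℤ)) = ((i:ℕ):ℤ) := rfl
    have hvj : ((j:ℤ)) = ((j:ℕ):ℤ) := rfl
    rw [hvi, hvj]
    simp only [Fin.ext_iff]
    split_ifs <;> (try ring) <;> (exfalso; omega)
  have hsum : ∑ i, M k i * G i j = M k j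
      + (if hb : 0 < (j:ℕ) then q * M k ⟨(j:ℕ)-1, by omega⟩ else 0)
      + (if hb : (j:ℕ)+1 < n then q * M k ⟨(j:ℕ)+1, hb⟩ else 0) := by
    have e1 : ∑ i, M k i * G i j =
        (∑ i : Fin n, if i = j then M k i else 0)
        + (∑ i : Fin n, if (i:ℕ)+1 = (j:ℕ) then q * M k i else 0)
        + (∑ i : Fin n, if (i:ℕ) = (j:ℕ)+1 then q * M k i else 0) := by
      rw [← Finset.sum_add_distrib, ← Finset.sum_add_distrib]
      apply Finset.sum_congr rfl
      intro i _
      rw [hGsplit i]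
      split_ifs <;> ring
    rw [e1]
    congr 1
    · congr 1
      · rw [Finset.sum_ite_eq' Finset.univ j (fun i => M k i)]
        simp
      · by_cases hb : 0 < (j:ℕ)
        · rw [dif_pos hb]
          rw [Finset.sum_eq_single (⟨(j:ℕ)-1, by omega⟩ : Fin n)]
          · rw [if_pos (by simp; omega)]
          · intro i _ hne
            rw [if_neg]
            intro hc
            exact hne (Fin.ext (by simp; omega))
          · intro h; exact absurd (Finset.mem_univ _) h
        · rw [dif_neg hb]
          apply Finset.sum_eq_zero
          intro i _
          rw [if_neg (by omega)]
    · by_cases hb : (j:ℕ)+1 < n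
      · rw [dif_pos hb]
        rw [Finset.sum_eq_single (⟨(j:ℕ)+1, hb⟩ : Fin n)]
        · rw [if_pos (by simp)]
        · intro i _ hne
          rw [if_neg]
          intro hc
          exact hne (Fin.ext (by simpa using hc))
        · intro h; exact absurd (Finset.mem_univ _) h
      · rw [dif_neg hb]
        apply Finset.sum_eq_zero
        intro i _
        rw [if_neg (by omega)]
  rw [hsum]
  rcases lt_trichotomy (k:ℕ) (j:ℕ) with hkj | hkj | hkj
  · -- k < j : off-diagonal, goal 0
    have hne : k ≠ j := fun h => by rw [h] at hkj; omega
    rw [Matrix.one_apply_ne hne]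
    have hb0 : 0 < (j:ℕ) := by omega
    rw [dif_pos hb0]
    obtain ⟨d, hd⟩ : ∃ d, (j:ℕ) = (k:ℕ) + d + 1 := ⟨(j:ℕ)-(k:ℕ)-1, by omega⟩
    have h1 := hMval k j (le_of_lt hkj)
    have h2 := hMval k ⟨(j:ℕ)-1, by omega⟩ (by simp only [Fin.mk_val]; omega)
    simp only [Fin.mk_val] at h2
    rw [show (j:ℕ)-(k:ℕ) = d+1 by omega] at h1
    rw [show (j:ℕ)-1-(k:ℕ) = d by omega] at h2
    by_cases hbn : (j:ℕ) + 1 < n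
    · rw [dif_pos hbn]
      obtain ⟨e, he⟩ : ∃ e, n = (j:ℕ) + e + 2 := ⟨n-(j:ℕ)-2, by omega⟩
      have h3 := hMval k ⟨(j:ℕ)+1, hbn⟩ (by simp only [Fin.mk_val]; omega)
      simp only [Fin.mk_val] at h3
      rw [show (j:ℕ)+1-(k:ℕ) = d+2 by omega] at h3
      rw [show n-1-((j:ℕ)+1) = e by omega] at h3
      rw [show n-1-((j:ℕ)-1) = e+2 by omega] at h2
      rw [show n-1-(j:ℕ) = e+1 by omega] at h1
      rw [h1, h2, h3, chebU_rec α e, hp2 d, pow_succ r d, h2aq]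
      ring
    · rw [dif_neg hbn]
      have hjn : (j:ℕ) = n - 1 := by omega
      rw [show n-1-(j:ℕ) = 0 by omega] at h1
      rw [show n-1-((j:ℕ)-1) = 1 by omega] at h2
      rw [h1, h2, chebU_zero, chebU_one, pow_succ r d, h2aq]
      ring
  · -- k = j : diagonal, goal 1
    have hkj2 : k = j := Fin.ext hkj
    subst hkj2
    rw [Matrix.one_apply_eq]
    have hmul : ∀ x y : ℝ, q * (r * (x/y)) = q*r*x/y := by intro x y; ring
    have h1 := hMval k k le_rfl
    rw [show (k:ℕ)-(k:ℕ) = 0 by omega, pow_zero, one_mul] at h1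
    by_cases hb0 : 0 < (k:ℕ)
    · rw [dif_pos hb0]
      have h2' := hMval ⟨(k:ℕ)-1, by omega⟩ k (by simp only [Fin.mk_val]; omega)
      simp only [Fin.mk_val] at h2'
      have h2 : M k ⟨(k:ℕ)-1, by omega⟩ = _ := (hMsym k _).trans h2'
      rw [show (k:ℕ)-((k:ℕ)-1) = 1 by omega, pow_one] at h2
      by_cases hbn : (k:ℕ)+1 < n
      · -- interior diagonal
        rw [dif_pos hbn]
        obtain ⟨e, he⟩ : ∃ e, n = (k:ℕ) + e + 2 := ⟨n-(k:ℕ)-2, by omega⟩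
        obtain ⟨c, hc⟩ : ∃ c, (k:ℕ) = c + 1 := ⟨(k:ℕ)-1, by omega⟩
        have h3 := hMval k ⟨(k:ℕ)+1, hbn⟩ (by simp only [Fin.mk_val]; omega)
        simp only [Fin.mk_val] at h3
        rw [show (k:ℕ)+1-(k:ℕ) = 1 by omega, pow_one] at h3
        rw [show n-1-((k:ℕ)+1) = e by omega] at h3
        rw [show n-1-(k:ℕ) = e+1 by omega] at h1 h2
        conv at h2 => rhs; rw [show (k:ℕ)-1 = c by omega]
        have hprod := chebU_prod α (k:ℕ) e
        have hrec := chebU_rec α c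
        rw [show c+2 = (k:ℕ)+1 by omega, show c+1 = (k:ℕ) by omega] at hrec
        have hDn : chebU α n = chebU α ((k:ℕ)+e+2) := by rw [← he]
        have key : chebU α (k:ℕ) * chebU α (e+1) + q * r * (chebU α c * chebU α (e+1))
            + q * r * (chebU α (k:ℕ) * chebU α e) = |q| * chebU α n := by
          rw [hDn, hprod, hrec]
          linear_combination (chebU α c * chebU α (e+1) + chebU α (k:ℕ) * chebU α e) * hqr
            - (chebU α (k:ℕ) * chebU α (e+1)) * h2a
        rw [h1, h2, h3, hmul, hmul, ← add_div, ← add_div, key, div_self hD]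
      · -- last diagonal entry
        rw [dif_neg hbn]
        obtain ⟨m, hm⟩ : ∃ m, n = m + 2 := ⟨n-2, by omega⟩
        rw [show n-1-(k:ℕ) = 0 by omega] at h1 h2
        conv at h2 => rhs; rw [show (k:ℕ)-1 = m by omega]
        have hDn : chebU α n = chebU α (m+2) := by rw [← hm]
        have key : chebU α (k:ℕ) * chebU α 0 + q * r * (chebU α m * chebU α 0)
            = |q| * chebU α n := by
          rw [hDn, chebU_rec α m, chebU_zero, show (k:ℕ) = m+1 by omega]
          linear_combination (chebU α m) * hqr - (chebU α (m+1)) * h2a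
        rw [add_zero, h1, h2, hmul, ← add_div, key, div_self hD]
    · -- first diagonal entry
      rw [dif_neg hb0]
      have hk0 : (k:ℕ) = 0 := by omega
      by_cases hbn : (k:ℕ)+1 < n
      · rw [dif_pos hbn]
        obtain ⟨m, hm⟩ : ∃ m, n = m + 2 := ⟨n-2, by omega⟩
        have h3 := hMval k ⟨(k:ℕ)+1, hbn⟩ (by simp only [Fin.mk_val]; omega)
        simp only [Fin.mk_val] at h3
        rw [show (k:ℕ)+1-(k:ℕ) = 1 by omega, pow_one] at h3
        rw [show n-1-((k:ℕ)+1) = m by omega] at h3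
        rw [show n-1-(k:ℕ) = m+1 by omega] at h1
        have hDn : chebU α n = chebU α (m+2) := by rw [← hm]
        have key : chebU α (k:ℕ) * chebU α (m+1) + q * r * (chebU α (k:ℕ) * chebU α m)
            = |q| * chebU α n := by
          rw [hk0, chebU_zero, hDn, chebU_rec α m]
          linear_combination (chebU α m) * hqr - (chebU α (m+1)) * h2a
        rw [add_zero, h1, h3, hmul, ← add_div, key, div_self hD]
      · -- n = 1
        rw [dif_neg hbn]
        have hn1 : n = 1 := by omega
        rw [show n-1-(k:ℕ) = 0 by omega] at h1
        have hDn : chebU α n = chebU α 1 := by rw [← hn1]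
        have key : chebU α (k:ℕ) * chebU α 0 = |q| * chebU α n := by
          rw [hk0, chebU_zero, hDn, chebU_one]
          linear_combination -h2a
        rw [add_zero, add_zero, h1, key, div_self hD]
  · -- k > j : off-diagonal, goal 0
    have hne : k ≠ j := fun h => by rw [h] at hkj; omega
    rw [Matrix.one_apply_ne hne]
    have hbn : (j:ℕ)+1 < n := by omega
    rw [dif_pos hbn]
    have h1' := hMval j k (le_of_lt hkj)
    have h1 : M k j = _ := (hMsym k j).trans h1'
    have h3' := hMval ⟨(j:ℕ)+1, hbn⟩ k (by simp only [Fin.mk_val]; omega)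
    simp only [Fin.mk_val] at h3'
    have h3 : M k ⟨(j:ℕ)+1, hbn⟩ = _ := (hMsym k _).trans h3'
    obtain ⟨d, hd⟩ : ∃ d, (k:ℕ) = (j:ℕ) + d + 1 := ⟨(k:ℕ)-(j:ℕ)-1, by omega⟩
    rw [show (k:ℕ)-(j:ℕ) = d+1 by omega] at h1
    rw [show (k:ℕ)-((j:ℕ)+1) = d by omega] at h3
    by_cases hb0 : 0 < (j:ℕ)
    · rw [dif_pos hb0]
      obtain ⟨c, hc⟩ : ∃ c, (j:ℕ) = c + 1 := ⟨(j:ℕ)-1, by omega⟩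
      have h2' := hMval ⟨(j:ℕ)-1, by omega⟩ k (by simp only [Fin.mk_val]; omega)
      simp only [Fin.mk_val] at h2'
      have h2 : M k ⟨(j:ℕ)-1, by omega⟩ = _ := (hMsym k _).trans h2'
      rw [show (k:ℕ)-((j:ℕ)-1) = d+2 by omega] at h2
      conv at h2 => rhs; rw [show (j:ℕ)-1 = c by omega]
      have hrec := chebU_rec α c
      rw [show c+2 = (j:ℕ)+1 by omega, show c+1 = (j:ℕ) by omega] at hrec
      rw [h1, h2, h3, hrec, hp2 d, pow_succ r d, h2aq]
      ring
    · rw [dif_neg hb0]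
      have hj0 : (j:ℕ) = 0 := by omega
      rw [h1, h3, hj0, chebU_zero, chebU_one, pow_succ r d, h2aq]
      ring
end
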